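/- Let H be a divisor-closed submonoid of P_fin,0(ℕ). Let S be the submonoid of ℕ generated by the union of all members of H, and let T be the submonoid of ℕ generated by the union of all sets rev(B) for B ∈ H. Then H = {B ∈ P_fin,0(ℕ) : B ⊆ S and rev(B) ⊆ T}. Moreover, there exists A ∈ H such that S is generated by A and T is generated by rev(A); and for any such A one has H = ⟦A⟧. -/

import Mathlib

open Pointwise

/-- The reversal `rev(B) = {max(B) - b : b ∈ B}` of a finite set `B ⊆ ℕ`. -/
def rev (B : Finset ℕ) : Finset ℕ := B.image (fun b => B.sup id - b)

/-- Divisibility in the restricted power monoid `P_fin,0(ℕ)`: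
`B` divides `A` if `A = B + C` for some finite `C` containing `0`. -/
def Dvd0 (B A : Finset ℕ) : Prop := ∃ C : Finset ℕ, 0 ∈ C ∧ A = B + C

/-- Divisor-closed submonoids of `P_fin,0(ℕ)`. -/
def IsDCS (H : Set (Finset ℕ)) : Prop :=
  (∀ A ∈ H, 0 ∈ A) ∧ ({0} : Finset ℕ) ∈ H ∧
    (∀ A ∈ H, ∀ B ∈ H, A + B ∈ H) ∧
    (∀ A ∈ H, ∀ B : Finset ℕ, 0 ∈ B → Dvd0 B A → B ∈ H)

/-- The `n`-fold sumset `nA` of a finite set `A ⊆ ℕ` (with `0A = {0}`). -/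
def nfold (A : Finset ℕ) : ℕ → Finset ℕ
  | 0 => {0}
  | n + 1 => nfold A n + A

/-- `⟦A⟧`: the set of all `B ∈ P_fin,0(ℕ)` dividing some `n`-fold sumset `nA`;
it is the smallest divisor-closed submonoid of `P_fin,0(ℕ)` containing `A`. -/
def ddSub (A : Finset ℕ) : Set (Finset ℕ) :=
  {B | 0 ∈ B ∧ ∃ n : ℕ, Dvd0 B (nfold A n)}

namespace PMZ

open AddSubmonoid

variable {A B : Finset ℕ}

open AddSubmonoid

variable {A B : Finset ℕ}

lemma sup_mem (h : A.Nonempty) : A.sup id ∈ A := by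
  obtain ⟨a, ha, he⟩ := A.exists_mem_eq_sup h id
  rwa [he]

lemma le_sup_of_mem {a : ℕ} (ha : a ∈ A) : a ≤ A.sup id := Finset.le_sup (f := id) ha

lemma mem_rev {y : ℕ} : y ∈ rev A ↔ ∃ a ∈ A, A.sup id - a = y := by
  simp [rev]

lemma sup_mem_rev (h0 : 0 ∈ A) : A.sup id ∈ rev A := mem_rev.mpr ⟨0, h0, by simp⟩

lemma zero_mem_rev (h0 : 0 ∈ A) : 0 ∈ rev A :=
  mem_rev.mpr ⟨A.sup id, sup_mem ⟨0, h0⟩, by simp⟩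

lemma sup_rev (h0 : 0 ∈ A) : (rev A).sup id = A.sup id := by
  apply le_antisymm
  · apply Finset.sup_le
    intro y hy
    obtain ⟨a, ha, rfl⟩ := mem_rev.mp hy
    exact tsub_le_self
  · exact le_sup_of_mem (sup_mem_rev h0)

lemma rev_rev (h0 : 0 ∈ A) : rev (rev A) = A := by
  ext x
  rw [show rev (rev A) = (rev A).image (fun b => (rev A).sup id - b) from rfl]
  rw [sup_rev h0]
  simp only [Finset.mem_image]
  constructor
  · rintro ⟨y, hy, rfl⟩
    obtain ⟨a, ha, rfl⟩ := mem_rev.mp hy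
    have := le_sup_of_mem ha
    have hx : A.sup id - (A.sup id - a) = a := by omega
    rwa [hx]
  · intro hx
    refine ⟨A.sup id - x, mem_rev.mpr ⟨x, hx, rfl⟩, ?_⟩
    have := le_sup_of_mem hx
    omega

lemma sup_add (hA : A.Nonempty) (hB : B.Nonempty) :
    (A + B).sup id = A.sup id + B.sup id := by
  apply le_antisymm
  · apply Finset.sup_le
    intro x hx
    rw [Finset.mem_add] at hx
    obtain ⟨a, ha, b, hb, rfl⟩ := hx
    exact Nat.add_le_add (le_sup_of_mem ha) (le_sup_of_mem hb)
  · exact Finset.le_sup (f := id)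
      (Finset.mem_add.mpr ⟨A.sup id, sup_mem hA, B.sup id, sup_mem hB, rfl⟩)

lemma subset_add_right (h0B : 0 ∈ B) : A ⊆ A + B := fun a ha =>
  Finset.mem_add.mpr ⟨a, ha, 0, h0B, add_zero a⟩

lemma rev_subset_rev_add (h0A : 0 ∈ A) (h0B : 0 ∈ B) : rev A ⊆ rev (A + B) := by
  intro y hy
  obtain ⟨a, ha, rfl⟩ := mem_rev.mp hy
  rw [mem_rev, sup_add ⟨0, h0A⟩ ⟨0, h0B⟩]
  refine ⟨a + B.sup id, Finset.mem_add.mpr ⟨a, ha, B.sup id, sup_mem ⟨0, h0B⟩, rfl⟩, ?_⟩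
  have := le_sup_of_mem ha
  omega

lemma zero_mem_nfold (h0 : 0 ∈ A) : ∀ n, 0 ∈ nfold A n
  | 0 => by simp [nfold]
  | n + 1 => by
      rw [nfold, Finset.mem_add]
      exact ⟨0, zero_mem_nfold h0 n, 0, h0, rfl⟩

lemma nfold_mono (h0 : 0 ∈ A) {n n' : ℕ} (h : n ≤ n') : nfold A n ⊆ nfold A n' := by
  induction h with
  | refl => exact fun x hx => hx
  | step _ ih =>
      intro x hx
      rw [nfold, Finset.mem_add]
      exact ⟨x, ih hx, 0, h0, add_zero x⟩

lemma nfold_subset_closure {x : ℕ} : ∀ {n}, x ∈ nfold A n → x ∈ AddSubmonoid.closure (A : Set ℕ)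
  | 0, hx => by
      simp only [nfold, Finset.mem_singleton] at hx
      rw [hx]; exact zero_mem _
  | n + 1, hx => by
      rw [nfold, Finset.mem_add] at hx
      obtain ⟨u, hu, a, ha, rfl⟩ := hx
      exact add_mem (nfold_subset_closure hu) (subset_closure (Finset.mem_coe.mpr ha))

lemma multiset_sum_mem_nfold {M : Multiset ℕ} (h : ∀ v ∈ M, v ∈ A) :
    M.sum ∈ nfold A (Multiset.card M) := by
  induction M using Multiset.induction with
  | empty => simp [nfold]
  | cons a M ih =>
      simp only [Multiset.sum_cons, Multiset.card_cons]
      rw [nfold, Finset.mem_add]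
      exact ⟨M.sum, ih (fun v hv => h v (Multiset.mem_cons_of_mem hv)),
        a, h a (Multiset.mem_cons_self a M), add_comm _ _⟩

lemma exists_nfold_of_mem_closure (h0 : 0 ∈ A) (hm : 1 ≤ A.sup id) {x : ℕ}
    (hx : x ∈ AddSubmonoid.closure (A : Set ℕ)) :
    ∃ t, t ≤ x / A.sup id + A.sup id * A.card ∧ x ∈ nfold A t := by
  classical
  set m := A.sup id with hmdef
  have hmA : m ∈ A := sup_mem ⟨0, h0⟩
  obtain ⟨M0, hM0, hs0⟩ := AddSubmonoid.exists_multiset_of_mem_closure hx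
  have hex : ∃ n, ∃ M : Multiset ℕ, Multiset.card M = n ∧ (∀ v ∈ M, v ∈ A) ∧ M.sum = x :=
    ⟨_, M0, rfl, fun v hv => Finset.mem_coe.mp (hM0 v hv), hs0⟩
  set n0 := Nat.find hex with hn0def
  obtain ⟨M, hcard, hmem, hsum⟩ := Nat.find_spec hex
  -- count bound for small values
  have hcount : ∀ v, v < m → M.count v ≤ m - 1 := by
    intro v hv
    by_contra hcv
    have hge : m ≤ M.count v := by omega
    have hR : Multiset.replicate m v ≤ M := Multiset.le_iff_count.mpr (by
      intro w
      rw [Multiset.count_replicate]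
      split
      · next h => rw [← h]; exact hge
      · exact Nat.zero_le _)
    have hMsplit : (M - Multiset.replicate m v) + Multiset.replicate m v = M :=
      tsub_add_cancel_of_le hR
    set M' := (M - Multiset.replicate m v) + Multiset.replicate v m with hM'def
    have hsum1 : (M - Multiset.replicate m v).sum + m * v = x := by
      have := congrArg Multiset.sum hMsplit
      rw [Multiset.sum_add, Multiset.sum_replicate, smul_eq_mul] at this
      rw [this]; exact hsum
    have hsum' : M'.sum = x := by
      rw [hM'def, Multiset.sum_add, Multiset.sum_replicate, smul_eq_mul]
      have hvm : v * m = m * v := mul_comm _ _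
      omega
    have hcardsub : Multiset.card (M - Multiset.replicate m v) = n0 - m := by
      have := congrArg Multiset.card hMsplit
      rw [Multiset.card_add, Multiset.card_replicate] at this
      omega
    have hmlen0 : m ≤ n0 := by
      calc m ≤ M.count v := hge
        _ ≤ Multiset.card M := Multiset.count_le_card v M
        _ = n0 := hcard
    have hcard' : Multiset.card M' = n0 - m + v := by
      rw [hM'def, Multiset.card_add, Multiset.card_replicate, hcardsub]
    have hlt : n0 - m + v < n0 := by omega
    exact Nat.find_min hex hlt ⟨M', hcard', by
      intro w hw
      rw [hM'def, Multiset.mem_add] at hw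
      rcases hw with hw | hw
      · exact hmem w (Multiset.mem_of_le (tsub_le_self) hw)
      · rw [Multiset.eq_of_mem_replicate hw]; exact hmA, hsum'⟩
  -- split by value m
  have hsplitc : (M.filter (fun v => v = m)).card + (M.filter (fun v => ¬ v = m)).card = n0 := by
    rw [← Multiset.card_add, Multiset.filter_add_not]; exact hcard
  have hfeq : M.filter (fun v => v = m) = Multiset.replicate (M.count m) m := by
    rw [← Multiset.filter_eq]
    congr 1
    ext v
    simp [eq_comm]
  have hc1 : (M.filter (fun v => v = m)).card = M.count m := by
    rw [hfeq, Multiset.card_replicate]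
  have hcmx : M.count m * m ≤ x := by
    have := congrArg Multiset.sum (Multiset.filter_add_not (fun v => v = m) M)
    rw [Multiset.sum_add, hfeq, Multiset.sum_replicate, smul_eq_mul, hsum] at this
    omega
  have hcm : M.count m ≤ x / m := Nat.le_div_iff_mul_le hm |>.mpr hcmx
  set N := M.filter (fun v => ¬ v = m) with hNdef
  have hNcard : N.card ≤ A.card * (m - 1) := by
    rw [← Multiset.toFinset_sum_count_eq]
    have hsub : N.toFinset ⊆ A := by
      intro a ha
      rw [Multiset.mem_toFinset, hNdef, Multiset.mem_filter] at ha
      exact hmem a ha.1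
    calc ∑ a ∈ N.toFinset, N.count a ≤ ∑ _a ∈ N.toFinset, (m - 1) := by
          apply Finset.sum_le_sum
          intro a ha
          have haA : a ∈ A := hsub ha
          have ham : ¬ a = m := by
            rw [Multiset.mem_toFinset, hNdef, Multiset.mem_filter] at ha
            exact ha.2
          have halt : a < m := lt_of_le_of_ne (le_sup_of_mem haA) ham
          calc N.count a ≤ M.count a := Multiset.count_le_of_le a (Multiset.filter_le _ M)
            _ ≤ m - 1 := hcount a halt
      _ = N.toFinset.card * (m - 1) := by rw [Finset.sum_const, smul_eq_mul]
      _ ≤ A.card * (m - 1) := Nat.mul_le_mul_right _ (Finset.card_le_card hsub)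
  refine ⟨n0, ?_, ?_⟩
  · have : A.card * (m-1) ≤ m * A.card := by
      calc A.card * (m-1) ≤ A.card * m := Nat.mul_le_mul_left _ (by omega)
        _ = m * A.card := mul_comm _ _
    omega
  · have hnn : n0 = Multiset.card M := by rw [hn0def, ← hcard]
    rw [hnn, ← hsum]
    exact multiset_sum_mem_nfold hmem

lemma nfold_rev (h0 : 0 ∈ A) :
    ∀ n, ∀ x ∈ nfold A n, x ≤ n * A.sup id ∧ (n * A.sup id - x) ∈ nfold (rev A) n
  | 0 => by
      intro x hx
      simp only [nfold, Finset.mem_singleton] at hx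
      subst hx
      simp [nfold]
  | n + 1 => by
      intro x hx
      rw [nfold, Finset.mem_add] at hx
      obtain ⟨u, hu, a, ha, rfl⟩ := hx
      obtain ⟨h1, h2⟩ := nfold_rev h0 n u hu
      have ham := le_sup_of_mem ha
      have hsm : (n + 1) * A.sup id = n * A.sup id + A.sup id := by ring
      constructor
      · omega
      · rw [nfold, Finset.mem_add]
        refine ⟨n * A.sup id - u, h2, A.sup id - a, mem_rev.mpr ⟨a, ha, rfl⟩, by omega⟩

lemma mem_nfold_of (h0 : 0 ∈ A) (hm : 1 ≤ A.sup id) {n x : ℕ}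
    (hn : A.sup id * A.card + A.sup id * (rev A).card ≤ n)
    (hxle : x ≤ n * A.sup id)
    (hxS : x ∈ AddSubmonoid.closure (A : Set ℕ))
    (hxT : n * A.sup id - x ∈ AddSubmonoid.closure ((rev A : Finset ℕ) : Set ℕ)) :
    x ∈ nfold A n := by
  set m := A.sup id with hmdef
  set P := m * A.card with hPdef
  set P' := m * (rev A).card with hP'def
  have hPm : (n - P) * m = n * m - P * m := Nat.sub_mul _ _ _
  have hP'm : (n - P') * m = n * m - P' * m := Nat.sub_mul _ _ _
  have hPP'm : (P + P') * m ≤ n * m := Nat.mul_le_mul_right _ hn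
  have hPP'm' : (P + P') * m = P * m + P' * m := Nat.add_mul _ _ _
  by_cases hcase : x + P * m ≤ n * m
  · obtain ⟨t, ht, hxt⟩ := exists_nfold_of_mem_closure h0 hm hxS
    rw [← hmdef, ← hPdef] at ht
    have hxle2 : x ≤ (n - P) * m := by omega
    have hdiv : x / m ≤ n - P := by
      calc x / m ≤ (n - P) * m / m := Nat.div_le_div_right hxle2
        _ = n - P := Nat.mul_div_cancel _ hm
    have hPle : P ≤ n := by omega
    exact nfold_mono h0 (by omega) hxt
  · have hrev0 : 0 ∈ rev A := zero_mem_rev h0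
    have hrevsup : (rev A).sup id = m := sup_rev h0
    obtain ⟨q, hq, hzq⟩ := exists_nfold_of_mem_closure hrev0 (by rw [hrevsup]; exact hm) hxT
    rw [hrevsup, ← hP'def] at hq
    have hzle : n * m - x ≤ (n - P') * m := by omega
    have hdiv : (n * m - x) / m ≤ n - P' := by
      calc (n * m - x) / m ≤ (n - P') * m / m := Nat.div_le_div_right hzle
        _ = n - P' := Nat.mul_div_cancel _ hm
    have hP'le : P' ≤ n := by omega
    have hz : n * m - x ∈ nfold (rev A) n := nfold_mono hrev0 (by omega) hzq
    have hdual := nfold_rev hrev0 n _ hz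
    rw [rev_rev h0, hrevsup] at hdual
    have hxx : n * m - (n * m - x) = x := by omega
    rw [hxx] at hdual
    exact hdual.2

lemma eventually_full (U : AddSubmonoid ℕ) {u0 : ℕ} (hu0 : u0 ∈ U) (hu0pos : 0 < u0) :
    ∃ d G, 0 < d ∧ (∀ u ∈ U, d ∣ u) ∧ (∀ x, d ∣ x → G ≤ x → x ∈ U) := by
  classical
  set Uz : Set ℤ := (fun n : ℕ => (n : ℤ)) '' (U : Set ℕ) with hUz
  obtain ⟨g, hg⟩ := Int.subgroup_cyclic (AddSubgroup.closure Uz)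
  set d := g.natAbs with hd
  have hdvd : ∀ u ∈ U, d ∣ u := by
    intro u hu
    have : (u : ℤ) ∈ AddSubgroup.closure Uz := AddSubgroup.subset_closure ⟨u, hu, rfl⟩
    rw [hg, AddSubgroup.mem_closure_singleton] at this
    obtain ⟨k, hk⟩ := this
    have : g ∣ (u : ℤ) := ⟨k, by rw [← hk, zsmul_eq_mul]; exact mul_comm _ _⟩
    have h2 : g.natAbs ∣ (u : ℤ).natAbs := Int.natAbs_dvd_natAbs.mpr this
    simpa using h2
  have hdpos : 0 < d := by
    rcases Nat.eq_zero_or_pos d with h | h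
    · exfalso
      have := hdvd u0 hu0
      rw [h] at this
      omega
    · exact h
  -- g is a difference of two elements of U
  have hdiff : ∃ p ∈ U, ∃ q ∈ U, g = (p : ℤ) - (q : ℤ) := by
    have hsub : AddSubgroup.closure Uz ≤
        { carrier := {x : ℤ | ∃ p ∈ U, ∃ q ∈ U, x = (p : ℤ) - (q : ℤ)}
          zero_mem' := ⟨0, zero_mem U, 0, zero_mem U, by ring⟩
          add_mem' := by
            rintro x y ⟨p, hp, q, hq, rfl⟩ ⟨p', hp', q', hq', rfl⟩
            exact ⟨p + p', add_mem hp hp', q + q', add_mem hq hq', by push_cast; ring⟩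
          neg_mem' := by
            rintro x ⟨p, hp, q, hq, rfl⟩
            exact ⟨q, hq, p, hp, by ring⟩ } := by
      rw [AddSubgroup.closure_le]
      rintro x ⟨p, hp, rfl⟩
      exact ⟨p, hp, 0, zero_mem U, by push_cast; ring⟩
    have hgmem : g ∈ AddSubgroup.closure Uz := by
      rw [hg]
      exact AddSubgroup.mem_closure_singleton.mpr ⟨1, one_smul _ _⟩
    exact hsub hgmem
  obtain ⟨p0, hp0, q0, hq0, hgpq⟩ := hdiff
  -- get p q ∈ U with p = d + q
  have hpq : ∃ p ∈ U, ∃ q ∈ U, p = d + q := by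
    rcases Int.natAbs_eq g with he | he
    · refine ⟨p0, hp0, q0, hq0, ?_⟩
      rw [he] at hgpq
      rw [← hd] at hgpq
      omega
    · refine ⟨q0, hq0, p0, hp0, ?_⟩
      rw [he] at hgpq
      rw [← hd] at hgpq
      omega
  obtain ⟨p, hp, q, hq, hpq⟩ := hpq
  rcases Nat.eq_zero_or_pos q with hq0' | hqpos
  · -- d = p ∈ U
    subst hq0'
    refine ⟨d, 0, hdpos, hdvd, ?_⟩
    intro x hdx _
    obtain ⟨k, rfl⟩ := hdx
    have hdU : d ∈ U := by rwa [hpq, add_zero] at hp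
    have : k • d ∈ U := U.nsmul_mem hdU k
    rwa [smul_eq_mul, mul_comm] at this
  · set q1 := q / d with hq1
    have hdq : d ∣ q := hdvd q hq
    have hq1d : q1 * d = q := Nat.div_mul_cancel hdq
    have hq1pos : 0 < q1 := by
      rcases Nat.eq_zero_or_pos q1 with h | h
      · rw [h, zero_mul] at hq1d; omega
      · exact h
    refine ⟨d, d * (q1 * q1), hdpos, hdvd, ?_⟩
    intro x hdx hGx
    obtain ⟨k, rfl⟩ := hdx
    have hk : q1 * q1 ≤ k := by
      by_contra hcon
      push_neg at hcon
      have h1 : d * (k + 1) ≤ d * (q1 * q1) := Nat.mul_le_mul_left d (by omega)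
      have h2 : d * (k + 1) = d * k + d := by ring
      omega
    set r := k % q1 with hr
    set s' := k / q1 with hs'
    have hrlt : r < q1 := Nat.mod_lt _ hq1pos
    have hk2 : q1 * s' + r = k := Nat.div_add_mod k q1
    have hq1s' : q1 ≤ s' := Nat.le_div_iff_mul_le hq1pos |>.mpr (by nlinarith)
    have hrs' : r ≤ s' := by omega
    have hmem : r * p + (s' - r) * q ∈ U := by
      have h1 : r • p ∈ U := U.nsmul_mem hp r
      have h2 : (s' - r) • q ∈ U := U.nsmul_mem hq (s' - r)
      rw [smul_eq_mul] at h1 h2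
      exact add_mem h1 h2
    have heq : r * p + (s' - r) * q = d * k := by
      have e1 : r * p = r * d + r * q := by rw [hpq]; ring
      have e2 : (s' - r) * q = s' * q - r * q := Nat.sub_mul _ _ _
      have e3 : r * q ≤ s' * q := Nat.mul_le_mul_right _ hrs'
      have e4 : s' * q = s' * q1 * d := by rw [← hq1d]; ring
      have e5 : r * d + s' * q1 * d = (q1 * s' + r) * d := by ring
      have e6 : (q1 * s' + r) * d = k * d := by rw [hk2]
      have e7 : k * d = d * k := mul_comm _ _
      omega
    rw [← heq]
    exact hmem

lemma key (h0A : 0 ∈ A) {B : Finset ℕ} (h0B : 0 ∈ B)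
    (hBS : (B : Set ℕ) ⊆ (AddSubmonoid.closure (A : Set ℕ) : Set ℕ))
    (hBT : (rev B : Set ℕ) ⊆ (AddSubmonoid.closure ((rev A : Finset ℕ) : Set ℕ) : Set ℕ)) :
    ∃ n, Dvd0 B (nfold A n) := by
  classical
  by_cases hm0 : A.sup id = 0
  · have hB0' : ∀ b ∈ B, b = 0 := by
      intro b hb
      have hbS : b ∈ AddSubmonoid.closure (A : Set ℕ) := hBS (Finset.mem_coe.mpr hb)
      have hA : (A : Set ℕ) ⊆ ((⊥ : AddSubmonoid ℕ) : Set ℕ) := by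
        intro a ha
        have : a ≤ A.sup id := le_sup_of_mem (Finset.mem_coe.mp ha)
        simp only [SetLike.mem_coe, AddSubmonoid.mem_bot]
        omega
      have : b ∈ (⊥ : AddSubmonoid ℕ) := (AddSubmonoid.closure_le.mpr hA) hbS
      simpa using this
    have hB : B = {0} := Finset.eq_singleton_iff_unique_mem.mpr ⟨h0B, hB0'⟩
    refine ⟨0, {0}, Finset.mem_singleton_self 0, ?_⟩
    rw [hB]
    simp [nfold]
  · have hm1 : 1 ≤ A.sup id := Nat.pos_of_ne_zero hm0
    set m := A.sup id with hmdef
    have hmA : m ∈ A := sup_mem ⟨0, h0A⟩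
    have hmT : m ∈ AddSubmonoid.closure ((rev A : Finset ℕ) : Set ℕ) :=
      AddSubmonoid.subset_closure (Finset.mem_coe.mpr (sup_mem_rev h0A))
    have hmS : m ∈ AddSubmonoid.closure (A : Set ℕ) :=
      AddSubmonoid.subset_closure (Finset.mem_coe.mpr hmA)
    set bs := B.sup id with hbsdef
    have hbsB : bs ∈ B := sup_mem ⟨0, h0B⟩
    have hbsS : bs ∈ AddSubmonoid.closure (A : Set ℕ) := hBS (Finset.mem_coe.mpr hbsB)
    have hbsT : bs ∈ AddSubmonoid.closure ((rev A : Finset ℕ) : Set ℕ) :=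
      hBT (Finset.mem_coe.mpr (sup_mem_rev h0B))
    obtain ⟨dS, GS, hdSpos, hdSdvd, hGS⟩ :=
      eventually_full (AddSubmonoid.closure (A : Set ℕ)) hmS hm1
    obtain ⟨dT, GT, hdTpos, hdTdvd, hGT⟩ :=
      eventually_full (AddSubmonoid.closure ((rev A : Finset ℕ) : Set ℕ)) hmT hm1
    set P := m * A.card with hPdef
    set P' := m * (rev A).card with hP'def
    set n := P + P' + 2 * bs + GS + GT + 1 with hndef
    set L := n * m with hLdef
    have hLn : n ≤ L := by
      calc n = n * 1 := (mul_one n).symm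
        _ ≤ n * m := Nat.mul_le_mul_left n hm1
    have hL' : L = n * A.sup id := by rw [hLdef, hmdef]
    have hchar : ∀ y, y ∈ nfold A n ↔
        (y ≤ L ∧ y ∈ AddSubmonoid.closure (A : Set ℕ) ∧
          L - y ∈ AddSubmonoid.closure ((rev A : Finset ℕ) : Set ℕ)) := by
      intro y
      constructor
      · intro hy
        obtain ⟨h1, h2⟩ := nfold_rev h0A n y hy
        rw [← hmdef, ← hLdef] at h1 h2
        exact ⟨h1, nfold_subset_closure hy, nfold_subset_closure h2⟩
      · rintro ⟨h1, h2, h3⟩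
        refine mem_nfold_of h0A hm1 ?_ ?_ h2 ?_
        · rw [← hmdef, ← hPdef, ← hP'def]
          omega
        · rw [← hL']; exact h1
        · rw [← hL']; exact h3
    set C := (Finset.range (L - bs + 1)).filter
      (fun x => x ∈ AddSubmonoid.closure (A : Set ℕ) ∧
        (L - bs - x) ∈ AddSubmonoid.closure ((rev A : Finset ℕ) : Set ℕ)) with hCdef
    have hmemC : ∀ x, x ∈ C ↔ (x ≤ L - bs ∧ x ∈ AddSubmonoid.closure (A : Set ℕ) ∧
        (L - bs - x) ∈ AddSubmonoid.closure ((rev A : Finset ℕ) : Set ℕ)) := by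
      intro x
      rw [hCdef, Finset.mem_filter, Finset.mem_range]
      constructor
      · rintro ⟨h1, h2, h3⟩
        exact ⟨by omega, h2, h3⟩
      · rintro ⟨h1, h2, h3⟩
        exact ⟨by omega, h2, h3⟩
    have hC0 : 0 ∈ C := by
      rw [hmemC]
      refine ⟨Nat.zero_le _, zero_mem _, ?_⟩
      rw [Nat.sub_zero]
      have hd1 : dT ∣ L := by
        rw [hLdef]
        exact Dvd.dvd.mul_left (hdTdvd m hmT) n
      have hd2 : dT ∣ bs := hdTdvd bs hbsT
      exact hGT _ (Nat.dvd_sub hd1 hd2) (by omega)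
    refine ⟨n, C, hC0, ?_⟩
    apply Finset.ext
    intro y
    rw [hchar y, Finset.mem_add]
    constructor
    · rintro ⟨hyL, hyS, hyT⟩
      by_cases hzone : y + bs + GT ≤ L
      · refine ⟨0, h0B, y, ?_, zero_add y⟩
        rw [hmemC]
        refine ⟨by omega, hyS, ?_⟩
        have hrw : L - bs - y = (L - y) - bs := by omega
        rw [hrw]
        have hd1 : dT ∣ (L - y) := hdTdvd _ hyT
        have hd2 : dT ∣ bs := hdTdvd bs hbsT
        exact hGT _ (Nat.dvd_sub hd1 hd2) (by omega)
      · have hyb : bs + GS + 1 ≤ y := by omega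
        refine ⟨bs, hbsB, y - bs, ?_, by omega⟩
        rw [hmemC]
        refine ⟨by omega, ?_, ?_⟩
        · have hd1 : dS ∣ y := hdSdvd _ hyS
          have hd2 : dS ∣ bs := hdSdvd bs hbsS
          exact hGS _ (Nat.dvd_sub hd1 hd2) (by omega)
        · have hrw : L - bs - (y - bs) = L - y := by omega
          rw [hrw]; exact hyT
    · rintro ⟨b, hb, x, hx, rfl⟩
      rw [hmemC] at hx
      obtain ⟨hx1, hx2, hx3⟩ := hx
      have hbbs : b ≤ bs := le_sup_of_mem hb
      refine ⟨by omega, add_mem (hBS (Finset.mem_coe.mpr hb)) hx2, ?_⟩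
      have hbrev : bs - b ∈ rev B := mem_rev.mpr ⟨b, hb, rfl⟩
      have hbrevT : bs - b ∈ AddSubmonoid.closure ((rev A : Finset ℕ) : Set ℕ) :=
        hBT (Finset.mem_coe.mpr hbrev)
      have hrw : L - (b + x) = (L - bs - x) + (bs - b) := by omega
      rw [hrw]
      exact add_mem hx3 hbrevT

lemma fg_nat (U : AddSubmonoid ℕ) : ∃ F : Finset ℕ, (F : Set ℕ) ⊆ U ∧
    AddSubmonoid.closure (F : Set ℕ) = U := by
  classical
  by_cases hU : ∀ u ∈ U, u = 0
  · refine ⟨∅, by simp, ?_⟩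
    apply le_antisymm
    · rw [AddSubmonoid.closure_le]
      simp
    · intro u hu
      rw [hU u hu]
      exact zero_mem _
  · push_neg at hU
    obtain ⟨s, hsU, hs0⟩ := hU
    have hspos : 0 < s := Nat.pos_of_ne_zero hs0
    set f : ℕ → ℕ := fun r => sInf {x : ℕ | x ∈ U ∧ x % s = r} with hf
    set F : Finset ℕ := insert s ((Finset.range s).image f) with hF
    have hFU : (F : Set ℕ) ⊆ U := by
      intro a ha
      rw [hF] at ha
      simp only [Finset.coe_insert, Set.mem_insert_iff, Finset.coe_image,
        Set.mem_image, Finset.mem_coe, Finset.mem_range] at ha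
      rcases ha with rfl | ⟨r, _, rfl⟩
      · exact hsU
      · rw [hf]
        by_cases hne : {x : ℕ | x ∈ U ∧ x % s = r}.Nonempty
        · exact (Nat.sInf_mem hne).1
        · rw [Set.not_nonempty_iff_eq_empty] at hne
          show sInf {x : ℕ | x ∈ U ∧ x % s = r} ∈ (U : Set ℕ)
          rw [hne, Nat.sInf_empty]
          exact zero_mem _
    refine ⟨F, hFU, ?_⟩
    apply le_antisymm
    · rw [AddSubmonoid.closure_le]
      exact hFU
    · intro x hx
      have hne : {y : ℕ | y ∈ U ∧ y % s = x % s}.Nonempty := ⟨x, hx, rfl⟩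
      have hq := Nat.sInf_mem hne
      set q := sInf {y : ℕ | y ∈ U ∧ y % s = x % s} with hqdef
      have hqle : q ≤ x := Nat.sInf_le ⟨hx, rfl⟩
      have hmod : x % s = q % s := hq.2.symm
      have hdvd : s ∣ x - q := (Nat.modEq_iff_dvd' hqle).mp hmod.symm
      obtain ⟨k, hk⟩ := hdvd
      have hqF : q ∈ AddSubmonoid.closure (F : Set ℕ) := by
        apply AddSubmonoid.subset_closure
        rw [hF]
        simp only [Finset.coe_insert, Set.mem_insert_iff, Finset.coe_image,
          Set.mem_image, Finset.mem_coe, Finset.mem_range]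
        right
        exact ⟨x % s, Nat.mod_lt _ hspos, rfl⟩
      have hsF : s ∈ AddSubmonoid.closure (F : Set ℕ) := by
        apply AddSubmonoid.subset_closure
        rw [hF]
        simp
      have : q + k • s ∈ AddSubmonoid.closure (F : Set ℕ) :=
        add_mem hqF (AddSubmonoid.nsmul_mem _ hsF k)
      rw [smul_eq_mul] at this
      have hx2 : x = q + k * s := by
        have : s * k = k * s := mul_comm _ _
        omega
      rwa [← hx2] at this
end PMZ

/-- Characterization of the divisor-closed submonoids of `P_fin,0(ℕ)`:
every divisor-closed submonoid `H` equals
`{B ∈ P_fin,0(ℕ) : B ⊆ S and rev(B) ⊆ T}` where `S = ⟨⋃_{C ∈ H} C⟩` and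
`T = ⟨⋃_{C ∈ H} rev C⟩`; moreover there is `A ∈ H` with `⟨A⟩ = S`, `⟨rev A⟩ = T`,
and for any such `A` one has `H = ⟦A⟧`. -/
theorem divisor_closed_submonoid_characterization (H : Set (Finset ℕ)) (hH : IsDCS H) :
    H = {B : Finset ℕ | 0 ∈ B ∧
          (B : Set ℕ) ⊆ (AddSubmonoid.closure (⋃ C ∈ H, (C : Set ℕ)) : Set ℕ) ∧
          (rev B : Set ℕ) ⊆ (AddSubmonoid.closure (⋃ C ∈ H, (rev C : Set ℕ)) : Set ℕ)} ∧
    (∃ A ∈ H,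
      AddSubmonoid.closure (A : Set ℕ) = AddSubmonoid.closure (⋃ C ∈ H, (C : Set ℕ)) ∧
      AddSubmonoid.closure (rev A : Set ℕ) =
        AddSubmonoid.closure (⋃ C ∈ H, (rev C : Set ℕ))) ∧
    (∀ A ∈ H,
      AddSubmonoid.closure (A : Set ℕ) = AddSubmonoid.closure (⋃ C ∈ H, (C : Set ℕ)) →
      AddSubmonoid.closure (rev A : Set ℕ) =
        AddSubmonoid.closure (⋃ C ∈ H, (rev C : Set ℕ)) →
      H = ddSub A) := by
  classical
  obtain ⟨h0, hsing, hadd, hdvd⟩ := hH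
  have hnf : ∀ A ∈ H, ∀ n, nfold A n ∈ H := by
    intro A hA n
    induction n with
    | zero => exact hsing
    | succ n ih => exact hadd _ ih _ hA
  set S := AddSubmonoid.closure (⋃ C ∈ H, (C : Set ℕ)) with hS
  set T := AddSubmonoid.closure (⋃ C ∈ H, (rev C : Set ℕ)) with hT
  have hdir : ∀ x ∈ S, ∃ D ∈ H, x ∈ AddSubmonoid.closure ((D : Finset ℕ) : Set ℕ) := by
    intro x hx
    rw [hS] at hx
    refine AddSubmonoid.closure_induction
      (motive := fun x _ => ∃ D ∈ H, x ∈ AddSubmonoid.closure ((D : Finset ℕ) : Set ℕ))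
      ?_ ?_ ?_ hx
    · intro y hy
      simp only [Set.mem_iUnion] at hy
      obtain ⟨C, hC, hyC⟩ := hy
      exact ⟨C, hC, AddSubmonoid.subset_closure hyC⟩
    · exact ⟨{0}, hsing, zero_mem _⟩
    · rintro y z - - ⟨D1, hD1, hy⟩ ⟨D2, hD2, hz⟩
      refine ⟨D1 + D2, hadd _ hD1 _ hD2, ?_⟩
      have h1 : D1 ⊆ D1 + D2 := PMZ.subset_add_right (h0 _ hD2)
      have h2 : D2 ⊆ D1 + D2 := by
        rw [add_comm]
        exact PMZ.subset_add_right (h0 _ hD1)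
      exact add_mem
        (AddSubmonoid.closure_mono (Finset.coe_subset.mpr h1) hy)
        (AddSubmonoid.closure_mono (Finset.coe_subset.mpr h2) hz)
  have hdir' : ∀ x ∈ T, ∃ D ∈ H, x ∈ AddSubmonoid.closure ((rev D : Finset ℕ) : Set ℕ) := by
    intro x hx
    rw [hT] at hx
    refine AddSubmonoid.closure_induction
      (motive := fun x _ => ∃ D ∈ H, x ∈ AddSubmonoid.closure ((rev D : Finset ℕ) : Set ℕ))
      ?_ ?_ ?_ hx
    · intro y hy
      simp only [Set.mem_iUnion] at hy
      obtain ⟨C, hC, hyC⟩ := hy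
      exact ⟨C, hC, AddSubmonoid.subset_closure hyC⟩
    · exact ⟨{0}, hsing, zero_mem _⟩
    · rintro y z - - ⟨D1, hD1, hy⟩ ⟨D2, hD2, hz⟩
      refine ⟨D1 + D2, hadd _ hD1 _ hD2, ?_⟩
      have h1 : rev D1 ⊆ rev (D1 + D2) := PMZ.rev_subset_rev_add (h0 _ hD1) (h0 _ hD2)
      have h2 : rev D2 ⊆ rev (D1 + D2) := by
        rw [add_comm]
        exact PMZ.rev_subset_rev_add (h0 _ hD2) (h0 _ hD1)
      exact add_mem
        (AddSubmonoid.closure_mono (Finset.coe_subset.mpr h1) hy)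
        (AddSubmonoid.closure_mono (Finset.coe_subset.mpr h2) hz)
  have hfold : ∀ F : Finset ℕ,
      (∀ b ∈ F, ∃ D ∈ H, b ∈ AddSubmonoid.closure ((D : Finset ℕ) : Set ℕ)) →
      ∃ D ∈ H, (F : Set ℕ) ⊆ (AddSubmonoid.closure ((D : Finset ℕ) : Set ℕ) : Set ℕ) := by
    intro F
    induction F using Finset.induction_on with
    | empty => exact fun _ => ⟨{0}, hsing, by simp⟩
    | insert _ _ hnotin ih =>
        intro hb
        obtain ⟨D1, hD1, h1⟩ := hb _ (Finset.mem_insert_self _ _)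
        obtain ⟨D2, hD2, h2⟩ := ih (fun b hbF => hb b (Finset.mem_insert_of_mem hbF))
        refine ⟨D1 + D2, hadd _ hD1 _ hD2, ?_⟩
        rw [Finset.coe_insert, Set.insert_subset_iff]
        have hs1 : D1 ⊆ D1 + D2 := PMZ.subset_add_right (h0 _ hD2)
        have hs2 : D2 ⊆ D1 + D2 := by
          rw [add_comm]
          exact PMZ.subset_add_right (h0 _ hD1)
        constructor
        · exact AddSubmonoid.closure_mono (Finset.coe_subset.mpr hs1) h1
        · exact h2.trans (fun x hx => AddSubmonoid.closure_mono (Finset.coe_subset.mpr hs2) hx)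
  have hfold' : ∀ F : Finset ℕ,
      (∀ b ∈ F, ∃ D ∈ H, b ∈ AddSubmonoid.closure ((rev D : Finset ℕ) : Set ℕ)) →
      ∃ D ∈ H, (F : Set ℕ) ⊆ (AddSubmonoid.closure ((rev D : Finset ℕ) : Set ℕ) : Set ℕ) := by
    intro F
    induction F using Finset.induction_on with
    | empty => exact fun _ => ⟨{0}, hsing, by simp⟩
    | insert _ _ hnotin ih =>
        intro hb
        obtain ⟨D1, hD1, h1⟩ := hb _ (Finset.mem_insert_self _ _)
        obtain ⟨D2, hD2, h2⟩ := ih (fun b hbF => hb b (Finset.mem_insert_of_mem hbF))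
        refine ⟨D1 + D2, hadd _ hD1 _ hD2, ?_⟩
        rw [Finset.coe_insert, Set.insert_subset_iff]
        have hs1 : rev D1 ⊆ rev (D1 + D2) := PMZ.rev_subset_rev_add (h0 _ hD1) (h0 _ hD2)
        have hs2 : rev D2 ⊆ rev (D1 + D2) := by
          rw [add_comm]
          exact PMZ.rev_subset_rev_add (h0 _ hD2) (h0 _ hD1)
        constructor
        · exact AddSubmonoid.closure_mono (Finset.coe_subset.mpr hs1) h1
        · exact h2.trans (fun x hx => AddSubmonoid.closure_mono (Finset.coe_subset.mpr hs2) hx)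
  have hpart1 : H = {B : Finset ℕ | 0 ∈ B ∧
      (B : Set ℕ) ⊆ (S : Set ℕ) ∧ (rev B : Set ℕ) ⊆ (T : Set ℕ)} := by
    apply Set.eq_of_subset_of_subset
    · intro B hB
      refine ⟨h0 B hB, ?_, ?_⟩
      · intro b hb
        exact AddSubmonoid.subset_closure (Set.mem_iUnion₂.mpr ⟨B, hB, hb⟩)
      · intro b hb
        exact AddSubmonoid.subset_closure (Set.mem_iUnion₂.mpr ⟨B, hB, hb⟩)
    · rintro B ⟨hB0, hBS, hBT⟩
      obtain ⟨D, hD, hDS⟩ := hfold B (fun b hb => hdir b (hBS (Finset.mem_coe.mpr hb)))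
      obtain ⟨E, hE, hET⟩ := hfold' (rev B) (fun b hb => hdir' b (hBT (Finset.mem_coe.mpr hb)))
      have hAH : D + E ∈ H := hadd _ hD _ hE
      have h0A : 0 ∈ D + E := h0 _ hAH
      have hsD : D ⊆ D + E := PMZ.subset_add_right (h0 _ hE)
      have hsE : rev E ⊆ rev (D + E) := by
        rw [add_comm]
        exact PMZ.rev_subset_rev_add (h0 _ hE) (h0 _ hD)
      have hBS' : (B : Set ℕ) ⊆
          (AddSubmonoid.closure ((D + E : Finset ℕ) : Set ℕ) : Set ℕ) :=
        hDS.trans (fun x hx => AddSubmonoid.closure_mono (Finset.coe_subset.mpr hsD) hx)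
      have hBT' : (rev B : Set ℕ) ⊆
          (AddSubmonoid.closure ((rev (D + E) : Finset ℕ) : Set ℕ) : Set ℕ) :=
        hET.trans (fun x hx => AddSubmonoid.closure_mono (Finset.coe_subset.mpr hsE) hx)
      obtain ⟨n, hn⟩ := PMZ.key h0A hB0 hBS' hBT'
      exact hdvd _ (hnf _ hAH n) B hB0 hn
  refine ⟨hpart1, ?_, ?_⟩
  · obtain ⟨FS, hFSsub, hFSgen⟩ := PMZ.fg_nat S
    obtain ⟨FT, hFTsub, hFTgen⟩ := PMZ.fg_nat T
    obtain ⟨D, hD, hDS⟩ := hfold FS (fun b hb => hdir b (hFSsub (Finset.mem_coe.mpr hb)))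
    obtain ⟨E, hE, hET⟩ := hfold' FT (fun b hb => hdir' b (hFTsub (Finset.mem_coe.mpr hb)))
    have hAH : D + E ∈ H := hadd _ hD _ hE
    have hsD : D ⊆ D + E := PMZ.subset_add_right (h0 _ hE)
    have hsE : rev E ⊆ rev (D + E) := by
      rw [add_comm]
      exact PMZ.rev_subset_rev_add (h0 _ hE) (h0 _ hD)
    refine ⟨D + E, hAH, ?_, ?_⟩
    · apply le_antisymm
      · rw [AddSubmonoid.closure_le]
        intro a ha
        exact AddSubmonoid.subset_closure (Set.mem_iUnion₂.mpr ⟨D + E, hAH, ha⟩)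
      · rw [← hFSgen, AddSubmonoid.closure_le]
        refine hDS.trans ?_
        intro x hx
        exact AddSubmonoid.closure_mono (Finset.coe_subset.mpr hsD) hx
    · apply le_antisymm
      · rw [AddSubmonoid.closure_le]
        intro a ha
        exact AddSubmonoid.subset_closure (Set.mem_iUnion₂.mpr ⟨D + E, hAH, ha⟩)
      · rw [← hFTgen, AddSubmonoid.closure_le]
        refine hET.trans ?_
        intro x hx
        exact AddSubmonoid.closure_mono (Finset.coe_subset.mpr hsE) hx
  · intro A hA hAS hAT
    apply Set.eq_of_subset_of_subset
    · intro B hB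
      rw [hpart1] at hB
      obtain ⟨hB0, hBS, hBT⟩ := hB
      refine ⟨hB0, ?_⟩
      apply PMZ.key (h0 A hA) hB0
      · rw [hAS]; exact hBS
      · rw [hAT]; exact hBT
    · rintro B ⟨hB0, n, hdv⟩
      exact hdvd _ (hnf A hA n) B hB0 hdv
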